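/- Monoidal product of quantum partial orders is a quantum partial order: if R is a quantum order on 𝒳 and S is a quantum order on 𝒴, then R × S — defined on 𝒳 × 𝒴 (whose atoms are X ⊗ Y) by (R×S)(X⊗Y, X'⊗Y') = R(X,X') ⊗ S(Y,Y') — is reflexive, transitive, and antisymmetric. -/

import Mathlib

open Matrix

/-- A quantum relation between quantum sets: atom index types `ι`, `κ` with
dimension functions `a`, `b`; an entrywise choice of operator subspaces,
operators `L(X,Y)` represented as matrices. -/
abbrev QRel (ι κ : Type) (a : ι → ℕ) (b : κ → ℕ) : Type :=
  ∀ (X : ι) (Y : κ), Submodule ℂ (Matrix (Fin (b Y)) (Fin (a X)) ℂ)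

/-- Composition of quantum relations: entrywise span of products over
intermediate atoms. -/
noncomputable def qComp {ι κ μ : Type} {a : ι → ℕ} {b : κ → ℕ} {c : μ → ℕ}
    (S : QRel κ μ b c) (R : QRel ι κ a b) : QRel ι μ a c :=
  fun X Z => Submodule.span ℂ
    {t | ∃ (Y : κ) (r : Matrix (Fin (b Y)) (Fin (a X)) ℂ)
        (s : Matrix (Fin (c Z)) (Fin (b Y)) ℂ),
        r ∈ R X Y ∧ s ∈ S Y Z ∧ t = s * r}

/-- Adjoint of a quantum relation: entrywise conjugate transpose. -/
noncomputable def qAdj {ι κ : Type} {a : ι → ℕ} {b : κ → ℕ} (R : QRel ι κ a b) : QRel κ ι b a :=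
  fun Y X =>
  { carrier := {g | gᴴ ∈ R X Y}
    add_mem' := fun hx hy => by
      simpa [Matrix.conjTranspose_add] using (R X Y).add_mem hx hy
    zero_mem' := by simpa using (R X Y).zero_mem
    smul_mem' := fun c x hx => by
      simpa [Matrix.conjTranspose_smul] using (R X Y).smul_mem (star c) hx }

/-- The identity quantum relation: `ℂ·1` on the diagonal, `0` elsewhere. -/
noncomputable def qId (ι : Type) (a : ι → ℕ) : QRel ι ι a a :=
  fun X X' => Submodule.span ℂ
    {m | X = X' ∧ ∀ i j, m i j = if (i : ℕ) = (j : ℕ) then 1 else 0}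

/-- A quantum relation is a function when `F∘F† ≤ I` and `F†∘F ≥ I`. -/
def qIsFunc {ι κ : Type} {a : ι → ℕ} {b : κ → ℕ} (F : QRel ι κ a b) : Prop :=
  qComp F (qAdj F) ≤ qId κ b ∧ qId ι a ≤ qComp (qAdj F) F

/-- A quantum partial order: reflexive, transitive, antisymmetric. -/
def qIsOrder {ι : Type} {a : ι → ℕ} (R : QRel ι ι a a) : Prop :=
  qId ι a ≤ R ∧ qComp R R ≤ R ∧ R ⊓ qAdj R ≤ qId ι a

/-- The order on functions into a quantum poset `(𝒳,R)`: `F ⊑ G` iff `G ≤ R∘F`. -/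
def qFunLE {ι κ : Type} {a : ι → ℕ} {b : κ → ℕ} (R : QRel κ κ b b)
    (F G : QRel ι κ a b) : Prop :=
  G ≤ qComp R F

/-- The monoidal product of quantum relations: atoms are tensor products
(realized via the Kronecker product and `finProdFinEquiv`), entries are tensor
products of subspaces. -/
noncomputable def qProd {ι κ : Type} {a : ι → ℕ} {b : κ → ℕ}
    (R : QRel ι ι a a) (S : QRel κ κ b b) :
    QRel (ι × κ) (ι × κ) (fun p => a p.1 * b p.2) (fun p => a p.1 * b p.2) :=
  fun p q => Submodule.span ℂ
    {m | ∃ r ∈ R p.1 q.1, ∃ s ∈ S p.2 q.2,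
      m = Matrix.reindex finProdFinEquiv finProdFinEquiv
            (Matrix.kroneckerMap (· * ·) r s)}

/-! ### Auxiliary definitions and lemmas -/

/-- The (pseudo-)identity matrix generating `qId` entries. -/
noncomputable def Jmat (m m' : ℕ) : Matrix (Fin m') (Fin m) ℂ :=
  Matrix.of fun i j => if (i : ℕ) = (j : ℕ) then 1 else 0

lemma Jmat_mem_qId {ι : Type} {a : ι → ℕ} (X : ι) : Jmat (a X) (a X) ∈ qId ι a X X :=
  Submodule.subset_span ⟨rfl, fun _ _ => rfl⟩

lemma mem_qId_iff {ι : Type} {a : ι → ℕ} {X X' : ι}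
    {t : Matrix (Fin (a X')) (Fin (a X)) ℂ} :
    t ∈ qId ι a X X' ↔ (X = X' ∧ ∃ c : ℂ, t = c • Jmat (a X) (a X')) ∨ t = 0 := by
  constructor
  · intro h
    induction h using Submodule.span_induction with
    | mem m hm =>
      exact Or.inl ⟨hm.1, 1, by ext i j; simp [Jmat, hm.2 i j]⟩
    | zero => exact Or.inr rfl
    | add x y hx hy ihx ihy =>
      rcases ihx with ⟨hXX, c, rfl⟩ | rfl
      · rcases ihy with ⟨_, d, rfl⟩ | rfl
        · exact Or.inl ⟨hXX, c + d, by rw [add_smul]⟩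
        · exact Or.inl ⟨hXX, c, by rw [add_zero]⟩
      · rcases ihy with ⟨hXX, d, rfl⟩ | rfl
        · exact Or.inl ⟨hXX, d, by rw [zero_add]⟩
        · exact Or.inr (by rw [add_zero])
    | smul r x hx ihx =>
      rcases ihx with ⟨hXX, c, rfl⟩ | rfl
      · exact Or.inl ⟨hXX, r * c, smul_smul r c _⟩
      · exact Or.inr (smul_zero r)
  · rintro (⟨h, c, rfl⟩ | rfl)
    · exact (qId ι a X X').smul_mem c (by cases h; exact Jmat_mem_qId X)
    · exact (qId ι a X X').zero_mem

/-- Slice a big (Kronecker-indexed) matrix along the second factor. -/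
noncomputable def slice2 {m n m' n' : ℕ} (i : Fin n') (j : Fin n) :
    Matrix (Fin (m' * n')) (Fin (m * n)) ℂ →ₗ[ℂ] Matrix (Fin m') (Fin m) ℂ where
  toFun t := Matrix.of fun x y => t (finProdFinEquiv (x, i)) (finProdFinEquiv (y, j))
  map_add' _ _ := rfl
  map_smul' _ _ := rfl

/-- Slice a big (Kronecker-indexed) matrix along the first factor. -/
noncomputable def slice1 {m n m' n' : ℕ} (x : Fin m') (y : Fin m) :
    Matrix (Fin (m' * n')) (Fin (m * n)) ℂ →ₗ[ℂ] Matrix (Fin n') (Fin n) ℂ where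
  toFun t := Matrix.of fun i j => t (finProdFinEquiv (x, i)) (finProdFinEquiv (y, j))
  map_add' _ _ := rfl
  map_smul' _ _ := rfl

lemma slice2_apply {m n m' n' : ℕ} (i : Fin n') (j : Fin n)
    (t : Matrix (Fin (m' * n')) (Fin (m * n)) ℂ) (x : Fin m') (y : Fin m) :
    slice2 i j t x y = t (finProdFinEquiv (x, i)) (finProdFinEquiv (y, j)) := rfl

lemma slice1_apply {m n m' n' : ℕ} (x : Fin m') (y : Fin m)
    (t : Matrix (Fin (m' * n')) (Fin (m * n)) ℂ) (i : Fin n') (j : Fin n) :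
    slice1 x y t i j = t (finProdFinEquiv (x, i)) (finProdFinEquiv (y, j)) := rfl

lemma slice2_kron {m n m' n' : ℕ} (i : Fin n') (j : Fin n)
    (r : Matrix (Fin m') (Fin m) ℂ) (s : Matrix (Fin n') (Fin n) ℂ) :
    slice2 i j (Matrix.reindex finProdFinEquiv finProdFinEquiv
      (Matrix.kroneckerMap (· * ·) r s)) = s i j • r := by
  ext x y
  simp [slice2_apply, mul_comm]

lemma slice1_kron {m n m' n' : ℕ} (x : Fin m') (y : Fin m)
    (r : Matrix (Fin m') (Fin m) ℂ) (s : Matrix (Fin n') (Fin n) ℂ) :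
    slice1 x y (Matrix.reindex finProdFinEquiv finProdFinEquiv
      (Matrix.kroneckerMap (· * ·) r s)) = r x y • s := by
  ext i j
  simp [slice1_apply]

lemma slice2_mem {ι κ : Type} {a : ι → ℕ} {b : κ → ℕ}
    {R : QRel ι ι a a} {S : QRel κ κ b b} {p q : ι × κ}
    {t : Matrix (Fin (a q.1 * b q.2)) (Fin (a p.1 * b p.2)) ℂ}
    (ht : t ∈ qProd R S p q) (i : Fin (b q.2)) (j : Fin (b p.2)) :
    slice2 i j t ∈ R p.1 q.1 := by
  have h : qProd R S p q ≤ Submodule.comap (slice2 i j) (R p.1 q.1) := by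
    refine Submodule.span_le.2 ?_
    rintro m ⟨r, hr, s, hs, rfl⟩
    simp only [SetLike.mem_coe, Submodule.mem_comap, slice2_kron]
    exact (R p.1 q.1).smul_mem _ hr
  exact h ht

lemma slice1_mem {ι κ : Type} {a : ι → ℕ} {b : κ → ℕ}
    {R : QRel ι ι a a} {S : QRel κ κ b b} {p q : ι × κ}
    {t : Matrix (Fin (a q.1 * b q.2)) (Fin (a p.1 * b p.2)) ℂ}
    (ht : t ∈ qProd R S p q) (x : Fin (a q.1)) (y : Fin (a p.1)) :
    slice1 x y t ∈ S p.2 q.2 := by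
  have h : qProd R S p q ≤ Submodule.comap (slice1 x y) (S p.2 q.2) := by
    refine Submodule.span_le.2 ?_
    rintro m ⟨r, hr, s, hs, rfl⟩
    simp only [SetLike.mem_coe, Submodule.mem_comap, slice1_kron]
    exact (S p.2 q.2).smul_mem _ hs
  exact h ht

lemma slice2_conjTranspose {m n m' n' : ℕ} (i : Fin n) (j : Fin n')
    (t : Matrix (Fin (m' * n')) (Fin (m * n)) ℂ) :
    slice2 i j tᴴ = (slice2 j i t)ᴴ := by
  ext x y
  simp [slice2_apply]

lemma slice1_conjTranspose {m n m' n' : ℕ} (x : Fin m) (y : Fin m')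
    (t : Matrix (Fin (m' * n')) (Fin (m * n)) ℂ) :
    slice1 x y tᴴ = (slice1 y x t)ᴴ := by
  ext i j
  simp [slice1_apply]

lemma kron_J {m n : ℕ} :
    Matrix.reindex finProdFinEquiv finProdFinEquiv
      (Matrix.kroneckerMap (· * ·) (Jmat m m) (Jmat n n)) = Jmat (m * n) (m * n) := by
  ext u v
  obtain ⟨⟨x, i⟩, rfl⟩ : ∃ w, finProdFinEquiv w = u := ⟨finProdFinEquiv.symm u, Equiv.apply_symm_apply _ u⟩
  obtain ⟨⟨y, j⟩, rfl⟩ : ∃ w, finProdFinEquiv w = v := ⟨finProdFinEquiv.symm v, Equiv.apply_symm_apply _ v⟩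
  have key : ((finProdFinEquiv (x, i) : Fin (m * n)) : ℕ) =
      ((finProdFinEquiv (y, j) : Fin (m * n)) : ℕ) ↔ ((x : ℕ) = y ∧ (i : ℕ) = j) := by
    rw [Fin.val_eq_val, Equiv.apply_eq_iff_eq, Prod.mk.injEq, Fin.val_eq_val, Fin.val_eq_val]
  simp only [Matrix.reindex_apply, Matrix.submatrix_apply, Equiv.symm_apply_apply,
    Matrix.kroneckerMap_apply, Jmat, Matrix.of_apply, key]
  by_cases h1 : (x : ℕ) = (y : ℕ) <;> by_cases h2 : (i : ℕ) = (j : ℕ) <;> simp [h1, h2]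

lemma qProd_mul_mem {ι κ : Type} {a : ι → ℕ} {b : κ → ℕ}
    {R : QRel ι ι a a} {S : QRel κ κ b b} (hR2 : qComp R R ≤ R) (hS2 : qComp S S ≤ S)
    {p m q : ι × κ}
    {t₁ : Matrix (Fin (a m.1 * b m.2)) (Fin (a p.1 * b p.2)) ℂ}
    {t₂ : Matrix (Fin (a q.1 * b q.2)) (Fin (a m.1 * b m.2)) ℂ}
    (h₁ : t₁ ∈ qProd R S p m) (h₂ : t₂ ∈ qProd R S m q) :
    t₂ * t₁ ∈ qProd R S p q := by
  induction h₂ using Submodule.span_induction with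
  | mem x hx =>
    obtain ⟨r₂, hr₂, s₂, hs₂, rfl⟩ := hx
    induction h₁ using Submodule.span_induction with
    | mem y hy =>
      obtain ⟨r₁, hr₁, s₁, hs₁, rfl⟩ := hy
      have hmul : (Matrix.reindex finProdFinEquiv finProdFinEquiv
            (Matrix.kroneckerMap (· * ·) r₂ s₂)) *
          (Matrix.reindex finProdFinEquiv finProdFinEquiv
            (Matrix.kroneckerMap (· * ·) r₁ s₁)) =
          Matrix.reindex finProdFinEquiv finProdFinEquiv
            (Matrix.kroneckerMap (· * ·) (r₂ * r₁) (s₂ * s₁)) := by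
        rw [Matrix.reindex_apply, Matrix.reindex_apply, Matrix.reindex_apply,
          Matrix.submatrix_mul_equiv]
        exact congrArg (fun M => M.submatrix ⇑finProdFinEquiv.symm ⇑finProdFinEquiv.symm)
          (Matrix.mul_kronecker_mul r₂ r₁ s₂ s₁).symm
      rw [hmul]
      refine Submodule.subset_span ⟨r₂ * r₁, ?_, s₂ * s₁, ?_, rfl⟩
      · exact hR2 p.1 q.1 (Submodule.subset_span ⟨m.1, r₁, r₂, hr₁, hr₂, rfl⟩)
      · exact hS2 p.2 q.2 (Submodule.subset_span ⟨m.2, s₁, s₂, hs₁, hs₂, rfl⟩)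
    | zero => rw [Matrix.mul_zero]; exact (qProd R S p q).zero_mem
    | add u v hu hv ihu ihv => rw [Matrix.mul_add]; exact (qProd R S p q).add_mem ihu ihv
    | smul c u hu ihu => rw [Matrix.mul_smul]; exact (qProd R S p q).smul_mem c ihu
  | zero => rw [Matrix.zero_mul]; exact (qProd R S p q).zero_mem
  | add u v hu hv ihu ihv => rw [Matrix.add_mul]; exact (qProd R S p q).add_mem ihu ihv
  | smul c u hu ihu => rw [Matrix.smul_mul]; exact (qProd R S p q).smul_mem c ihu

/-- The monoidal product of quantum partial orders is a quantum partial
order. -/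
theorem qProd_isOrder {ι κ : Type} {a : ι → ℕ} {b : κ → ℕ}
    (R : QRel ι ι a a) (S : QRel κ κ b b)
    (hR : qIsOrder R) (hS : qIsOrder S) :
    qIsOrder (qProd R S) := by
  obtain ⟨hR1, hR2, hR3⟩ := hR
  obtain ⟨hS1, hS2, hS3⟩ := hS
  refine ⟨?_, ?_, ?_⟩
  · -- reflexivity
    intro p q t ht
    rcases mem_qId_iff.1 ht with ⟨hpq, c, rfl⟩ | rfl
    · cases hpq
      rw [← kron_J]
      exact (qProd R S p p).smul_mem c (Submodule.subset_span
        ⟨Jmat (a p.1) (a p.1), hR1 p.1 p.1 (Jmat_mem_qId p.1),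
          Jmat (b p.2) (b p.2), hS1 p.2 p.2 (Jmat_mem_qId p.2), rfl⟩)
    · exact (qProd R S p q).zero_mem
  · -- transitivity
    intro p q
    refine Submodule.span_le.2 ?_
    rintro tt ⟨m, t₁, t₂, h₁, h₂, rfl⟩
    exact qProd_mul_mem hR2 hS2 h₁ h₂
  · -- antisymmetry
    intro p q t ht
    have ht1 : t ∈ qProd R S p q := ht.1
    have ht2 : tᴴ ∈ qProd R S q p := ht.2
    -- slices of t are in the respective meets
    have hA : ∀ (i : Fin (b q.2)) (j : Fin (b p.2)),
        slice2 i j t ∈ qId ι a p.1 q.1 := by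
      intro i j
      refine hR3 p.1 q.1 (Submodule.mem_inf.mpr ⟨slice2_mem ht1 i j, ?_⟩)
      show (slice2 i j t)ᴴ ∈ R q.1 p.1
      rw [← slice2_conjTranspose]
      exact slice2_mem ht2 j i
    have hB : ∀ (x : Fin (a q.1)) (y : Fin (a p.1)),
        slice1 x y t ∈ qId κ b p.2 q.2 := by
      intro x y
      refine hS3 p.2 q.2 (Submodule.mem_inf.mpr ⟨slice1_mem ht1 x y, ?_⟩)
      show (slice1 x y t)ᴴ ∈ S q.2 p.2
      rw [← slice1_conjTranspose]
      exact slice1_mem ht2 y x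
    by_cases hpq1 : p.1 = q.1
    · by_cases hpq2 : p.2 = q.2
      · -- p = q : show t is a multiple of the identity
        obtain ⟨p1, p2⟩ := p
        obtain ⟨q1, q2⟩ := q
        simp only at hpq1 hpq2
        subst hpq1; subst hpq2
        have hc : ∀ (i j : Fin (b p2)), ∃ c : ℂ,
            slice2 i j t = c • Jmat (a p1) (a p1) := by
          intro i j
          rcases mem_qId_iff.1 (hA i j) with ⟨_, c, hcc⟩ | h0
          · exact ⟨c, hcc⟩
          · exact ⟨0, by rw [h0, zero_smul]⟩
        have hd : ∀ (x y : Fin (a p1)), ∃ d : ℂ,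
            slice1 x y t = d • Jmat (b p2) (b p2) := by
          intro x y
          rcases mem_qId_iff.1 (hB x y) with ⟨_, d, hdd⟩ | h0
          · exact ⟨d, hdd⟩
          · exact ⟨0, by rw [h0, zero_smul]⟩
        choose c hc using hc
        choose d hd using hd
        by_cases hdim : a p1 * b p2 = 0
        · have ht0 : t = 0 := by
            ext u v
            exact absurd u.isLt (by simp [hdim])
          rw [ht0]
          exact (qId (ι × κ) (fun p => a p.1 * b p.2) (p1, p2) (p1, p2)).zero_mem
        · have ha0 : a p1 ≠ 0 := fun h => hdim (by rw [h, Nat.zero_mul])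
          have hb0 : b p2 ≠ 0 := fun h => hdim (by rw [h, Nat.mul_zero])
          set x₀ : Fin (a p1) := ⟨0, Nat.pos_of_ne_zero ha0⟩
          have E : ∀ (x y : Fin (a p1)) (i j : Fin (b p2)),
              t (finProdFinEquiv (x, i)) (finProdFinEquiv (y, j)) =
                c i j * (if (x : ℕ) = (y : ℕ) then 1 else 0) := by
            intro x y i j
            have := congrFun (congrFun (hc i j) x) y
            simpa [slice2_apply, Jmat] using this
          have E' : ∀ (x y : Fin (a p1)) (i j : Fin (b p2)),
              t (finProdFinEquiv (x, i)) (finProdFinEquiv (y, j)) =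
                d x y * (if (i : ℕ) = (j : ℕ) then 1 else 0) := by
            intro x y i j
            have := congrFun (congrFun (hd x y) i) j
            simpa [slice1_apply, Jmat] using this
          have hcij : ∀ (i j : Fin (b p2)),
              c i j = d x₀ x₀ * (if (i : ℕ) = (j : ℕ) then 1 else 0) := by
            intro i j
            have h2 := (E x₀ x₀ i j).symm.trans (E' x₀ x₀ i j)
            simpa using h2
          have key : t = (d x₀ x₀) • Matrix.reindex finProdFinEquiv finProdFinEquiv
              (Matrix.kroneckerMap (· * ·) (Jmat (a p1) (a p1)) (Jmat (b p2) (b p2))) := by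
            ext u v
            obtain ⟨⟨x, i⟩, rfl⟩ : ∃ w, finProdFinEquiv w = u := ⟨finProdFinEquiv.symm u, Equiv.apply_symm_apply _ u⟩
            obtain ⟨⟨y, j⟩, rfl⟩ : ∃ w, finProdFinEquiv w = v := ⟨finProdFinEquiv.symm v, Equiv.apply_symm_apply _ v⟩
            rw [E x y i j, hcij i j]
            simp only [Matrix.smul_apply, Matrix.reindex_apply, Matrix.submatrix_apply,
              Equiv.symm_apply_apply, Matrix.kroneckerMap_apply, Jmat, Matrix.of_apply,
              smul_eq_mul]
            ring
          rw [key, kron_J]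
          exact Submodule.smul_mem _ _ (Jmat_mem_qId (a := fun p : ι × κ => a p.1 * b p.2)
            (p1, p2))
      · -- p.2 ≠ q.2 : all slices along the first factor vanish
        have hzero : ∀ (x : Fin (a q.1)) (y : Fin (a p.1)), slice1 x y t = 0 := by
          intro x y
          rcases mem_qId_iff.1 (hB x y) with ⟨h, _⟩ | h0
          · exact absurd h hpq2
          · exact h0
        have ht0 : t = 0 := by
          ext u v
          obtain ⟨⟨x, i⟩, rfl⟩ : ∃ w, finProdFinEquiv w = u := ⟨finProdFinEquiv.symm u, Equiv.apply_symm_apply _ u⟩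
          obtain ⟨⟨y, j⟩, rfl⟩ : ∃ w, finProdFinEquiv w = v := ⟨finProdFinEquiv.symm v, Equiv.apply_symm_apply _ v⟩
          have := congrFun (congrFun (hzero x y) i) j
          simpa [slice1_apply] using this
        rw [ht0]
        exact Submodule.zero_mem _
    · -- p.1 ≠ q.1 : all slices along the second factor vanish
      have hzero : ∀ (i : Fin (b q.2)) (j : Fin (b p.2)), slice2 i j t = 0 := by
        intro i j
        rcases mem_qId_iff.1 (hA i j) with ⟨h, _⟩ | h0
        · exact absurd h hpq1
        · exact h0
      have ht0 : t = 0 := by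
        ext u v
        obtain ⟨⟨x, i⟩, rfl⟩ : ∃ w, finProdFinEquiv w = u := ⟨finProdFinEquiv.symm u, Equiv.apply_symm_apply _ u⟩
        obtain ⟨⟨y, j⟩, rfl⟩ : ∃ w, finProdFinEquiv w = v := ⟨finProdFinEquiv.symm v, Equiv.apply_symm_apply _ v⟩
        have := congrFun (congrFun (hzero i j) x) y
        simpa [slice2_apply] using this
      rw [ht0]
      exact Submodule.zero_mem _
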